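/- If H is a dissolution of G, then bcg(H) = bcg(G), where bcg(F) denotes the maximum k for which the uniformly triangulated grid Γ_k is a contraction of F. -/

import Mathlib

open SimpleGraph

universe u

/-- A set `S` is a connected set of `G` if the induced subgraph is connected. -/
def ConnSet {V : Type u} (G : SimpleGraph V) (S : Set V) : Prop :=
  (G.induce S).Connected

/-- `σ` witnesses that `H` is a contraction of `G`: `σ` is surjective, every fiber
induces a connected nonempty subgraph, and `H.Adj x y` iff the union of the fibers
of `x` and `y` induces a connected subgraph. -/
def IsContractionMap {V : Type u} {W : Type*} (G : SimpleGraph V) (H : SimpleGraph W)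
    (σ : V → W) : Prop :=
  Function.Surjective σ ∧
  (∀ x : W, ConnSet G (σ ⁻¹' {x})) ∧
  (∀ x y : W, x ≠ y → (H.Adj x y ↔ ConnSet G (σ ⁻¹' {x} ∪ σ ⁻¹' {y})))

/-- `H` is a contraction of `G`. -/
def IsContraction {W : Type*} {V : Type u} (H : SimpleGraph W) (G : SimpleGraph V) : Prop :=
  ∃ σ : V → W, IsContractionMap G H σ

/-- The set `S` has diameter at most `c` in `G` (distances measured in `G[S]`). -/
def DiamLE {V : Type u} (G : SimpleGraph V) (S : Set V) (c : ℕ) : Prop :=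
  ∀ u v : S, (G.induce S).dist u v ≤ c

/-- `H` is a `c`-size contraction of `G`: all fibers have at most `c` vertices. -/
def IsSizeContraction {W : Type*} {V : Type u} (H : SimpleGraph W) (G : SimpleGraph V)
    (c : ℕ) : Prop :=
  ∃ σ : V → W, IsContractionMap G H σ ∧ ∀ x : W, (σ ⁻¹' {x}).ncard ≤ c

/-- `H` is a `c`-diameter contraction of `G`: all fibers have diameter at most `c`. -/
def IsDiamContraction {W : Type*} {V : Type u} (H : SimpleGraph W) (G : SimpleGraph V)
    (c : ℕ) : Prop :=
  ∃ σ : V → W, IsContractionMap G H σ ∧ ∀ x : W, DiamLE G (σ ⁻¹' {x}) c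

/-- `H` is a minor of `G`: `H` is a contraction of a subgraph of `G`. -/
def IsMinor {W : Type*} {V : Type u} (H : SimpleGraph W) (G : SimpleGraph V) : Prop :=
  ∃ (S : Set V) (G' : SimpleGraph S),
    (∀ a b : S, G'.Adj a b → G.Adj a.val b.val) ∧ IsContraction H G'

/-- A tree-decomposition of `G`. -/
structure TreeDecomp {V : Type u} (G : SimpleGraph V) where
  ι : Type u
  T : SimpleGraph ι
  isTree : T.IsTree
  bag : ι → Set V
  mem_bag : ∀ v : V, ∃ t, v ∈ bag t
  edge_bag : ∀ ⦃u v : V⦄, G.Adj u v → ∃ t, u ∈ bag t ∧ v ∈ bag t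
  conn_bag : ∀ v : V, ConnSet T {t | v ∈ bag t}

/-- `G` has treewidth at most `k`. -/
def TwLE {V : Type u} (G : SimpleGraph V) (k : ℕ) : Prop :=
  ∃ D : TreeDecomp G, ∀ t, (D.bag t).ncard ≤ k + 1

/-- The treewidth of `G`. -/
noncomputable def tw {V : Type u} (G : SimpleGraph V) : ℕ :=
  sInf {k | TwLE G k}

/-- Boundary vertices of the `(k × k)`-grid. -/
def Boundary (k : ℕ) (q : Fin k × Fin k) : Prop :=
  q.1.val = 0 ∨ q.1.val = k - 1 ∨ q.2.val = 0 ∨ q.2.val = k - 1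

/-- The base relation of the uniformly triangulated grid `Γ_k`: grid edges,
diagonal edges, and edges from the corner `(k-1,k-1)` to all boundary vertices. -/
def triGridRel (k : ℕ) (p q : Fin k × Fin k) : Prop :=
  (p.1 = q.1 ∧ p.2.val + 1 = q.2.val) ∨
  (p.2 = q.2 ∧ p.1.val + 1 = q.1.val) ∨
  (p.1.val = q.1.val + 1 ∧ q.2.val = p.2.val + 1) ∨
  (p.1.val = k - 1 ∧ p.2.val = k - 1 ∧ Boundary k q)

/-- The uniformly triangulated grid `Γ_k`. -/
def triGrid (k : ℕ) : SimpleGraph (Fin k × Fin k) :=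
  SimpleGraph.fromRel (triGridRel k)

/-- `bcg G` is the maximum `k` such that `Γ_k` is a contraction of `G`. -/
noncomputable def bcg {V : Type u} (G : SimpleGraph V) : ℕ :=
  sSup {k | IsContraction (triGrid k) G}

/-- The graph obtained from `G` by dissolving the degree-2 vertex `v` with
neighbors `x` and `y`. -/
def dissolve {V : Type u} (G : SimpleGraph V) (v x y : V) :
    SimpleGraph {u : V // u ≠ v} :=
  SimpleGraph.fromRel (fun a b => G.Adj a.val b.val ∨ (a.val = x ∧ b.val = y))

/-- Bundled finite simple graphs. -/
structure BGraph : Type 1 where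
  V : Type
  [fintypeV : Fintype V]
  G : SimpleGraph V

attribute [instance] BGraph.fintypeV

/-- `B` is obtained from `A` by dissolving one degree-2 vertex. -/
def DissolveStep (A B : BGraph) : Prop :=
  ∃ (v x y : A.V), x ≠ y ∧ A.G.neighborSet v = {x, y} ∧
    Nonempty (B.G ≃g dissolve A.G v x y)

/-- `B` is a dissolution of `A` (a finite sequence of dissolutions of degree-2 vertices). -/
def IsDissolution (A B : BGraph) : Prop :=
  Relation.ReflTransGen DissolveStep A B

lemma rtg_lift {α β : Type*} {r : α → α → Prop} {p : β → β → Prop} {a b : α} (f : α → β)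
    (h : ∀ a b, r a b → p (f a) (f b)) (hab : Relation.ReflTransGen r a b) :
    Relation.ReflTransGen p (f a) (f b) :=
  Relation.ReflTransGen.lift f h _ _ hab

lemma rtg_lift' {α β : Type*} {r : α → α → Prop} {p : β → β → Prop} {a b : α} (f : α → β)
    (h : ∀ a b, r a b → Relation.ReflTransGen p (f a) (f b)) (hab : Relation.ReflTransGen r a b) :
    Relation.ReflTransGen p (f a) (f b) :=
  Relation.ReflTransGen.lift' f h _ _ hab

lemma connSet_iff {V : Type u} (G : SimpleGraph V) (S : Set V) :
    ConnSet G S ↔ S.Nonempty ∧ ∀ a ∈ S, ∀ b ∈ S,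
      Relation.ReflTransGen (fun p q => p ∈ S ∧ q ∈ S ∧ G.Adj p q) a b := by
  constructor
  · intro h
    refine ⟨Set.nonempty_coe_sort.mp h.nonempty, ?_⟩
    intro a ha b hb
    have hr := h.preconnected ⟨a, ha⟩ ⟨b, hb⟩
    rw [reachable_iff_reflTransGen] at hr
    exact rtg_lift (Subtype.val)
      (fun p q hpq => ⟨p.2, q.2, hpq⟩) hr
  · rintro ⟨hne, h⟩
    rw [ConnSet, connected_iff]
    refine ⟨?_, Set.nonempty_coe_sort.mpr hne⟩
    rintro ⟨a, ha⟩ ⟨b, hb⟩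
    have key : ∀ a b, Relation.ReflTransGen (fun p q => p ∈ S ∧ q ∈ S ∧ G.Adj p q) a b →
        ∀ (ha : a ∈ S) (hb : b ∈ S), (G.induce S).Reachable ⟨a, ha⟩ ⟨b, hb⟩ := by
      intro a b hab
      induction hab with
      | refl => intro ha hb; exact Reachable.refl _
      | @tail c d hac hcd ih =>
        intro ha hd
        exact (ih ha hcd.1).trans (SimpleGraph.Adj.reachable (by exact hcd.2.2))
    exact key a b (h a ha b hb) ha hb


lemma connSet_comap {V V' : Type u} {G : SimpleGraph V} {G' : SimpleGraph V'}
    (e : G ≃g G') (S : Set V') : ConnSet G (⇑e ⁻¹' S) ↔ ConnSet G' S := by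
  rw [connSet_iff, connSet_iff]
  constructor
  · rintro ⟨⟨a, ha⟩, h⟩
    refine ⟨⟨e a, ha⟩, ?_⟩
    intro p hp q hq
    have := h (e.symm p) (by simp [hp]) (e.symm q) (by simp [hq])
    have := rtg_lift
      (p := fun p q => p ∈ S ∧ q ∈ S ∧ G'.Adj p q) (⇑e)
      (fun a b hab => ⟨hab.1, hab.2.1, (e.map_adj_iff).mpr hab.2.2⟩) this
    simpa using this
  · rintro ⟨⟨a, ha⟩, h⟩
    refine ⟨⟨e.symm a, by simp [ha]⟩, ?_⟩
    intro p hp q hq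
    have := h (e p) hp (e q) hq
    have := rtg_lift
      (p := fun p q => p ∈ ⇑e ⁻¹' S ∧ q ∈ ⇑e ⁻¹' S ∧ G.Adj p q) (⇑e.symm)
      (fun a b hab => ⟨by simpa using hab.1, by simpa using hab.2.1,
        by simpa using (e.symm.map_adj_iff).mpr hab.2.2⟩) this
    simpa using this

lemma isContraction_comap {V V' : Type u} {W : Type*} {G : SimpleGraph V} {G' : SimpleGraph V'}
    {H : SimpleGraph W} (e : G ≃g G') (h : IsContraction H G') : IsContraction H G := by
  obtain ⟨σ, hs, hf, ha⟩ := h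
  refine ⟨σ ∘ ⇑e, fun w => ?_, fun t => ?_, fun s r hsr => ?_⟩
  · obtain ⟨a, rfl⟩ := hs w; exact ⟨e.symm a, by simp⟩
  · have : (σ ∘ ⇑e) ⁻¹' {t} = ⇑e ⁻¹' (σ ⁻¹' {t}) := rfl
    rw [this, connSet_comap e]; exact hf t
  · rw [ha s r hsr]
    have : (σ ∘ ⇑e) ⁻¹' {s} ∪ (σ ∘ ⇑e) ⁻¹' {r} = ⇑e ⁻¹' (σ ⁻¹' {s} ∪ σ ⁻¹' {r}) := rfl
    rw [this, connSet_comap e]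

lemma isContraction_iso {V V' : Type u} {W : Type*} {G : SimpleGraph V} {G' : SimpleGraph V'}
    {H : SimpleGraph W} (e : G ≃g G') : IsContraction H G ↔ IsContraction H G' :=
  ⟨isContraction_comap e.symm, isContraction_comap e⟩


instance (k : ℕ) : DecidablePred (Boundary k) := fun q => by
  unfold Boundary; infer_instance

instance (k : ℕ) : DecidableRel (triGridRel k) := fun p q => by
  unfold triGridRel; infer_instance

instance (k : ℕ) : DecidableRel (triGrid k).Adj := fun p q =>
  decidable_of_iff _ (SimpleGraph.fromRel_adj (triGridRel k) p q).symm

set_option maxHeartbeats 1000000 in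
lemma triGrid_three_neighbors {k : ℕ} (hk : 2 ≤ k) (t : Fin k × Fin k) :
    ∃ a b c : Fin k × Fin k, a ≠ b ∧ a ≠ c ∧ b ≠ c ∧
      (triGrid k).Adj t a ∧ (triGrid k).Adj t b ∧ (triGrid k).Adj t c := by
  rcases eq_or_lt_of_le hk with hk2 | hk3
  · subst hk2
    revert t; decide
  · have hk3 : 3 ≤ k := hk3
    obtain ⟨⟨i, hi⟩, ⟨j, hj⟩⟩ := t
    by_cases hcor : i = k - 1 ∧ j = k - 1
    · refine ⟨(⟨0, by omega⟩, ⟨0, by omega⟩), (⟨0, by omega⟩, ⟨k-1, by omega⟩),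
        (⟨k-1, by omega⟩, ⟨0, by omega⟩), ?_, ?_, ?_, ?_, ?_, ?_⟩ <;>
        simp only [triGrid, fromRel_adj, triGridRel, Boundary, Ne, Prod.ext_iff,
          Fin.ext_iff, Fin.mk.injEq, Fin.val_mk, true_and, and_true, true_or, or_true] <;> omega
    · by_cases hbd : i = 0 ∨ i = k - 1 ∨ j = 0 ∨ j = k - 1
      · -- boundary, not corner
        obtain ⟨i', hi'k, hi'ne, hi'c, hi'adj⟩ :
            ∃ i', i' < k ∧ i' ≠ i ∧ i' ≠ k - 1 ∧ (i' + 1 = i ∨ i + 1 = i') := by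
          by_cases h0 : i = 0
          · exact ⟨1, by omega, by omega, by omega, by omega⟩
          · exact ⟨i - 1, by omega, by omega, by omega, by omega⟩
        obtain ⟨j', hj'k, hj'ne, hj'c, hj'adj⟩ :
            ∃ j', j' < k ∧ j' ≠ j ∧ j' ≠ k - 1 ∧ (j' + 1 = j ∨ j + 1 = j') := by
          by_cases h0 : j = 0
          · exact ⟨1, by omega, by omega, by omega, by omega⟩
          · exact ⟨j - 1, by omega, by omega, by omega, by omega⟩
        refine ⟨(⟨i', hi'k⟩, ⟨j, hj⟩), (⟨i, hi⟩, ⟨j', hj'k⟩),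
          (⟨k-1, by omega⟩, ⟨k-1, by omega⟩), ?_, ?_, ?_, ?_, ?_, ?_⟩ <;>
          simp only [triGrid, fromRel_adj, triGridRel, Boundary, Ne, Prod.ext_iff,
            Fin.ext_iff, Fin.mk.injEq, Fin.val_mk, true_and, and_true, true_or, or_true] <;> omega
      · -- interior
        simp only [not_or] at hbd
        refine ⟨(⟨i-1, by omega⟩, ⟨j, hj⟩), (⟨i+1, by omega⟩, ⟨j, hj⟩),
          (⟨i, hi⟩, ⟨j-1, by omega⟩), ?_, ?_, ?_, ?_, ?_, ?_⟩ <;>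
          simp only [triGrid, fromRel_adj, triGridRel, Boundary, Ne, Prod.ext_iff,
            Fin.ext_iff, Fin.mk.injEq, Fin.val_mk, true_and, and_true, true_or, or_true] <;> omega


section Dissolve
variable {V : Type u} {A : SimpleGraph V} {v x y : V}

lemma dissolve_adj {a b : {u : V // u ≠ v}} :
    (dissolve A v x y).Adj a b ↔ a.val ≠ b.val ∧
      (A.Adj a.val b.val ∨ (a.val = x ∧ b.val = y) ∨ (b.val = x ∧ a.val = y)) := by
  rw [dissolve, fromRel_adj]
  constructor
  · rintro ⟨hne, h⟩
    refine ⟨fun he => hne (Subtype.ext he), ?_⟩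
    rcases h with (h | h) | (h | h)
    · exact Or.inl h
    · exact Or.inr (Or.inl h)
    · exact Or.inl h.symm
    · exact Or.inr (Or.inr h)
  · rintro ⟨hne, h⟩
    refine ⟨fun he => hne (congrArg Subtype.val he), ?_⟩
    rcases h with h | h | h
    · exact Or.inl (Or.inl h)
    · exact Or.inl (Or.inr h)
    · exact Or.inr (Or.inr h)

lemma adj_v_iff (hN : A.neighborSet v = {x, y}) : ∀ u, A.Adj v u ↔ u = x ∨ u = y := by
  intro u
  have : u ∈ A.neighborSet v ↔ u ∈ ({x, y} : Set V) := by rw [hN]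
  simpa [SimpleGraph.mem_neighborSet] using this

lemma hvx (hN : A.neighborSet v = {x, y}) : A.Adj v x := (adj_v_iff hN x).mpr (Or.inl rfl)
lemma hvy (hN : A.neighborSet v = {x, y}) : A.Adj v y := (adj_v_iff hN y).mpr (Or.inr rfl)
lemma hxv (hN : A.neighborSet v = {x, y}) : x ≠ v := (hvx hN).ne'
lemma hyv (hN : A.neighborSet v = {x, y}) : y ≠ v := (hvy hN).ne'

/-- L1: transfer for sets avoiding `v` and missing `x` or `y`. -/
lemma connSet_dissolve_of_not_mem (hN : A.neighborSet v = {x, y}) {S : Set V}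
    (hv : v ∉ S) (hxyS : x ∉ S ∨ y ∉ S) :
    ConnSet A S ↔ ConnSet (dissolve A v x y) (Subtype.val ⁻¹' S) := by
  rw [connSet_iff, connSet_iff]
  set R := fun p q => p ∈ S ∧ q ∈ S ∧ A.Adj p q with hR
  set R' := fun (p q : {u : V // u ≠ v}) =>
    p ∈ Subtype.val ⁻¹' S ∧ q ∈ Subtype.val ⁻¹' S ∧ (dissolve A v x y).Adj p q with hR'
  constructor
  · rintro ⟨⟨a, ha⟩, h⟩
    have hav : a ≠ v := fun h' => hv (h' ▸ ha)
    refine ⟨⟨⟨a, hav⟩, ha⟩, ?_⟩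
    have key : ∀ (p) (hpv : p ≠ v), p ∈ S → ∀ q, Relation.ReflTransGen R p q →
        ∀ (hqv : q ≠ v), Relation.ReflTransGen R' ⟨p, hpv⟩ ⟨q, hqv⟩ := by
      intro p hpv hpS q hpq
      induction hpq with
      | refl => intro hqv; exact Relation.ReflTransGen.refl
      | @tail c d hac hcd ih =>
        intro hdv
        have hcv : c ≠ v := fun h' => hv (h' ▸ hcd.1)
        exact Relation.ReflTransGen.tail (ih hcv)
          ⟨hcd.1, hcd.2.1, dissolve_adj.mpr ⟨hcd.2.2.ne, Or.inl hcd.2.2⟩⟩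
    rintro ⟨p, hpv⟩ hp ⟨q, hqv⟩ hq
    exact key p hpv hp q (h p hp q hq) hqv
  · rintro ⟨⟨⟨a, hav⟩, ha⟩, h⟩
    refine ⟨⟨a, ha⟩, ?_⟩
    intro p hp q hq
    have hpv : p ≠ v := fun h' => hv (h' ▸ hp)
    have hqv : q ≠ v := fun h' => hv (h' ▸ hq)
    have := h ⟨p, hpv⟩ hp ⟨q, hqv⟩ hq
    exact rtg_lift (p := R) (Subtype.val) (fun a b hab => by
        obtain ⟨ha', hb', hadj⟩ := hab
        rcases dissolve_adj.mp hadj with ⟨hne, hA | ⟨hax, hby⟩ | ⟨hbx, hay⟩⟩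
        · exact ⟨ha', hb', hA⟩
        · have ha'' : (a : V) ∈ S := ha'
          have hb'' : (b : V) ∈ S := hb'
          rw [hax] at ha''; rw [hby] at hb''
          rcases hxyS with h' | h'
          · exact absurd ha'' h'
          · exact absurd hb'' h'
        · have ha'' : (a : V) ∈ S := ha'
          have hb'' : (b : V) ∈ S := hb'
          rw [hbx] at hb''; rw [hay] at ha''
          rcases hxyS with h' | h'
          · exact absurd hb'' h'
          · exact absurd ha'' h') this

/-- L2: transfer for sets containing `v` and `x` or `y`. -/
lemma connSet_dissolve_of_mem (hxy : x ≠ y) (hN : A.neighborSet v = {x, y}) {S : Set V}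
    (hv : v ∈ S) (hxS : x ∈ S ∨ y ∈ S) :
    ConnSet A S ↔ ConnSet (dissolve A v x y) (Subtype.val ⁻¹' S) := by
  classical
  obtain ⟨w, hwxy, hwS⟩ : ∃ w, (w = x ∨ w = y) ∧ w ∈ S := by
    rcases hxS with h | h
    · exact ⟨x, Or.inl rfl, h⟩
    · exact ⟨y, Or.inr rfl, h⟩
  have hwv : w ≠ v := by rcases hwxy with rfl | rfl; exacts [hxv hN, hyv hN]
  have hvw : A.Adj v w := by rcases hwxy with rfl | rfl; exacts [hvx hN, hvy hN]
  rw [connSet_iff, connSet_iff]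
  set R := fun p q => p ∈ S ∧ q ∈ S ∧ A.Adj p q with hR
  set R' := fun (p q : {u : V // u ≠ v}) =>
    p ∈ Subtype.val ⁻¹' S ∧ q ∈ Subtype.val ⁻¹' S ∧ (dissolve A v x y).Adj p q with hR'
  constructor
  · rintro ⟨-, h⟩
    refine ⟨⟨⟨w, hwv⟩, hwS⟩, ?_⟩
    rintro ⟨p, hpv⟩ hp ⟨q, hqv⟩ hq
    have step : ∀ a b, R a b → Relation.ReflTransGen R'
        (if h : a = v then ⟨w, hwv⟩ else ⟨a, h⟩) (if h : b = v then ⟨w, hwv⟩ else ⟨b, h⟩) := by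
      intro a b hab
      obtain ⟨haS, hbS, hadj⟩ := hab
      by_cases hav : a = v
      · rw [dif_pos hav]
        by_cases hbv : b = v
        · rw [hav, hbv] at hadj; exact absurd hadj (A.loopless.irrefl v)
        · rw [dif_neg hbv]
          rw [hav] at hadj
          have hbxy : b = x ∨ b = y := (adj_v_iff hN b).mp hadj
          by_cases hwb : w = b
          · subst hwb; exact Relation.ReflTransGen.refl
          · refine Relation.ReflTransGen.single ⟨hwS, hbS, dissolve_adj.mpr ⟨hwb, ?_⟩⟩
            rcases hwxy with rfl | rfl <;> rcases hbxy with rfl | rfl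
            · exact absurd rfl hwb
            · exact Or.inr (Or.inl ⟨rfl, rfl⟩)
            · exact Or.inr (Or.inr ⟨rfl, rfl⟩)
            · exact absurd rfl hwb
      · rw [dif_neg hav]
        by_cases hbv : b = v
        · rw [dif_pos hbv]
          rw [hbv] at hadj
          have haxy : a = x ∨ a = y := (adj_v_iff hN a).mp hadj.symm
          by_cases hwa : w = a
          · subst hwa; exact Relation.ReflTransGen.refl
          · refine Relation.ReflTransGen.single
              ⟨haS, hwS, dissolve_adj.mpr ⟨fun h => hwa h.symm, ?_⟩⟩
            rcases hwxy with rfl | rfl <;> rcases haxy with rfl | rfl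
            · exact absurd rfl hwa
            · exact Or.inr (Or.inr ⟨rfl, rfl⟩)
            · exact Or.inr (Or.inl ⟨rfl, rfl⟩)
            · exact absurd rfl hwa
        · rw [dif_neg hbv]
          exact Relation.ReflTransGen.single ⟨haS, hbS, dissolve_adj.mpr ⟨hadj.ne, Or.inl hadj⟩⟩
    have := rtg_lift' (p := R')
      (fun u => if h : u = v then ⟨w, hwv⟩ else ⟨u, h⟩) step (h p hp q hq)
    simpa only [dif_neg hpv, dif_neg hqv] using this
  · rintro ⟨-, h⟩
    refine ⟨⟨v, hv⟩, ?_⟩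
    have transfer : ∀ (p q : {u : V // u ≠ v}), p.val ∈ S → q.val ∈ S →
        Relation.ReflTransGen R p.val q.val := by
      intro p q hp hq
      have := h p hp q hq
      exact rtg_lift' (p := R) (Subtype.val) (fun a b hab => by
        obtain ⟨ha', hb', hadj⟩ := hab
        rcases dissolve_adj.mp hadj with ⟨hne, hA | ⟨hax, hby⟩ | ⟨hbx, hay⟩⟩
        · exact Relation.ReflTransGen.single ⟨ha', hb', hA⟩
        · exact Relation.ReflTransGen.tail (b := v)
            (Relation.ReflTransGen.single ⟨ha', hv, hax ▸ (hvx hN).symm⟩)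
            ⟨hv, hb', hby ▸ hvy hN⟩
        · exact Relation.ReflTransGen.tail (b := v)
            (Relation.ReflTransGen.single ⟨ha', hv, hay ▸ (hvy hN).symm⟩)
            ⟨hv, hb', hbx ▸ hvx hN⟩) this
    intro p hp q hq
    by_cases hpv : p = v
    · by_cases hqv : q = v
      · subst hpv hqv; exact Relation.ReflTransGen.refl
      · subst hpv
        exact Relation.ReflTransGen.head ⟨hv, hwS, hvw⟩ (transfer ⟨w, hwv⟩ ⟨q, hqv⟩ hwS hq)
    · by_cases hqv : q = v
      · subst hqv
        exact Relation.ReflTransGen.tail (transfer ⟨p, hpv⟩ ⟨w, hwv⟩ hp hwS) ⟨hwS, hv, hvw.symm⟩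
      · exact transfer ⟨p, hpv⟩ ⟨q, hqv⟩ hp hq

/-- Direction 2: a contraction of the dissolved graph yields one of the original. -/
lemma isContraction_of_dissolve {W : Type*} {H : SimpleGraph W}
    (hxy : x ≠ y) (hN : A.neighborSet v = {x, y})
    (h : IsContraction H (dissolve A v x y)) : IsContraction H A := by
  classical
  obtain ⟨σ, hsurj, hfib, hadj⟩ := h
  refine ⟨fun u => if h : u = v then σ ⟨x, hxv hN⟩ else σ ⟨u, h⟩, ?_, ?_, ?_⟩
  case _ =>
    intro s
    obtain ⟨⟨u, hu⟩, h⟩ := hsurj s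
    exact ⟨u, by simp only [dif_neg hu]; exact h⟩
  all_goals
    have hpre : ∀ s : W, Subtype.val ⁻¹'
        ((fun u => if h : u = v then σ ⟨x, hxv hN⟩ else σ ⟨u, h⟩) ⁻¹' {s}) = σ ⁻¹' {s} := by
      intro s
      ext ⟨u, hu⟩
      simp only [Set.mem_preimage, Set.mem_singleton_iff, dif_neg hu]
    have hvmem : ∀ s : W, v ∈ ((fun u => if h : u = v then σ ⟨x, hxv hN⟩ else σ ⟨u, h⟩) ⁻¹' {s})
        ↔ σ ⟨x, hxv hN⟩ = s := by
      intro s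
      simp only [Set.mem_preimage, Set.mem_singleton_iff]
      rw [dif_pos trivial]
    have hxmem : ∀ s : W, x ∈ ((fun u => if h : u = v then σ ⟨x, hxv hN⟩ else σ ⟨u, h⟩) ⁻¹' {s})
        ↔ σ ⟨x, hxv hN⟩ = s := by
      intro s
      simp only [Set.mem_preimage, Set.mem_singleton_iff]
      rw [dif_neg (hxv hN)]
  case _ =>
    intro s
    by_cases hst : σ ⟨x, hxv hN⟩ = s
    · rw [connSet_dissolve_of_mem hxy hN ((hvmem s).mpr hst) (Or.inl ((hxmem s).mpr hst)),
        hpre s]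
      exact hfib s
    · rw [connSet_dissolve_of_not_mem hN (fun hm => hst ((hvmem s).mp hm))
        (Or.inl (fun hm => hst ((hxmem s).mp hm))), hpre s]
      exact hfib s
  case _ =>
    intro s r hsr
    rw [hadj s r hsr]
    by_cases hst : σ ⟨x, hxv hN⟩ = s ∨ σ ⟨x, hxv hN⟩ = r
    · rw [connSet_dissolve_of_mem hxy hN
        (hst.elim (fun h => Or.inl ((hvmem s).mpr h)) (fun h => Or.inr ((hvmem r).mpr h)))
        (Or.inl (hst.elim (fun h => Or.inl ((hxmem s).mpr h))
          (fun h => Or.inr ((hxmem r).mpr h)))),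
        Set.preimage_union, hpre s, hpre r]
    · push_neg at hst
      rw [connSet_dissolve_of_not_mem hN
        (fun hm => hm.elim (fun hm => hst.1 ((hvmem s).mp hm)) (fun hm => hst.2 ((hvmem r).mp hm)))
        (Or.inl (fun hm => hm.elim (fun hm => hst.1 ((hxmem s).mp hm))
          (fun hm => hst.2 ((hxmem r).mp hm)))),
        Set.preimage_union, hpre s, hpre r]

/-- Direction 1: a triGrid contraction of the original graph yields one of the dissolved. -/
lemma isContraction_dissolve {k : ℕ}
    (hxy : x ≠ y) (hN : A.neighborSet v = {x, y})
    (h : IsContraction (triGrid k) A) : IsContraction (triGrid k) (dissolve A v x y) := by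
  classical
  obtain ⟨σ, hsurj, hfib, hadj⟩ := h
  -- Step 1: the fiber of σ v contains a vertex other than v
  have hw : ∃ u, u ≠ v ∧ σ u = σ v := by
    by_contra hcon
    push_neg at hcon
    have h2 : ∀ u, σ u = σ v → u = v := by
      intro u hu
      by_contra huv
      exact (hcon u huv) hu
    have hnbr : ∀ s, (triGrid k).Adj (σ v) s → s = σ x ∨ s = σ y := by
      intro s hs
      have hts : σ v ≠ s := hs.ne
      have hconn := (hadj (σ v) s hts).mp hs
      rw [connSet_iff] at hconn
      obtain ⟨u, hu⟩ := hsurj s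
      have huv : u ≠ v := by
        intro h'
        rw [h'] at hu
        exact hts hu
      have hreach := hconn.2 v (Or.inl rfl) u (Or.inr hu)
      rcases hreach.cases_head with heq | ⟨c, hc, -⟩
      · exact absurd heq.symm huv
      · obtain ⟨-, hcmem, hvc⟩ := hc
        have hcv : c ≠ v := hvc.ne'
        have hcs : σ c = s := by
          rcases hcmem with hm | hm
          · exact absurd (h2 c hm) hcv
          · exact hm
        rcases (adj_v_iff hN c).mp hvc with rfl | rfl
        · exact Or.inl hcs.symm
        · exact Or.inr hcs.symm
    have hxt : σ x ≠ σ v := fun h' => (hxv hN) (h2 x h')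
    have hyt : σ y ≠ σ v := fun h' => (hyv hN) (h2 y h')
    have hk : k = 0 ∨ k = 1 ∨ 2 ≤ k := by omega
    rcases hk with rfl | rfl | hk
    · exact Nat.not_lt_zero _ (σ v).1.isLt
    · refine hxt (Prod.ext (Fin.ext ?_) (Fin.ext ?_))
      · have h1 := (σ x).1.isLt; have h2 := (σ v).1.isLt; omega
      · have h1 := (σ x).2.isLt; have h2 := (σ v).2.isLt; omega
    · obtain ⟨a, b, c, hab, hac, hbc, ha, hb, hc⟩ := triGrid_three_neighbors hk (σ v)
      rcases hnbr a ha with rfl | rfl <;> rcases hnbr b hb with h1 | h1 <;>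
        rcases hnbr c hc with h2 | h2 <;> simp_all
  obtain ⟨w, hwv, hwt⟩ := hw
  -- Step 2: x or y lies in the fiber of σ v
  have hxyt : σ x = σ v ∨ σ y = σ v := by
    have hconn := hfib (σ v)
    rw [connSet_iff] at hconn
    have hreach := hconn.2 v rfl w hwt
    rcases hreach.cases_head with heq | ⟨c, hc, -⟩
    · exact absurd heq.symm hwv
    · obtain ⟨-, hcmem, hvc⟩ := hc
      rcases (adj_v_iff hN c).mp hvc with rfl | rfl
      · exact Or.inl hcmem
      · exact Or.inr hcmem
  refine ⟨fun u => σ u.val, ?_, ?_, ?_⟩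
  · intro s
    by_cases hst : s = σ v
    · exact ⟨⟨w, hwv⟩, by rw [hst]; exact hwt⟩
    · obtain ⟨u, hu⟩ := hsurj s
      have huv : u ≠ v := by
        intro h'
        rw [h'] at hu
        exact hst hu.symm
      exact ⟨⟨u, huv⟩, hu⟩
  · intro s
    have hpre : (fun (u : {u : V // u ≠ v}) => σ u.val) ⁻¹' {s}
        = Subtype.val ⁻¹' (σ ⁻¹' {s}) := rfl
    rw [hpre]
    by_cases hst : s = σ v
    · rw [← connSet_dissolve_of_mem hxy hN (show v ∈ σ ⁻¹' {s} from hst.symm)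
        (hxyt.elim (fun h => Or.inl (show σ x = s from hst ▸ h))
          (fun h => Or.inr (show σ y = s from hst ▸ h)))]
      exact hfib s
    · rw [← connSet_dissolve_of_not_mem hN (fun hm => hst (show s = σ v from hm.symm))
        (hxyt.elim
          (fun h => Or.inl (fun hm => hst (show s = σ v by rw [← (hm : σ x = s)]; exact h)))
          (fun h => Or.inr (fun hm => hst (show s = σ v by rw [← (hm : σ y = s)]; exact h))))]
      exact hfib s
  · intro s r hsr
    rw [hadj s r hsr]
    have hpre : (fun (u : {u : V // u ≠ v}) => σ u.val) ⁻¹' {s} ∪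
        (fun (u : {u : V // u ≠ v}) => σ u.val) ⁻¹' {r}
        = Subtype.val ⁻¹' (σ ⁻¹' {s} ∪ σ ⁻¹' {r}) := rfl
    rw [hpre]
    by_cases hst : σ v = s ∨ σ v = r
    · exact connSet_dissolve_of_mem hxy hN
        (hst.elim (fun h => Or.inl (show σ v = s from h)) (fun h => Or.inr (show σ v = r from h)))
        (hxyt.elim
          (fun h => hst.elim (fun h' => Or.inl (Or.inl (show σ x = s from h ▸ h')))
            (fun h' => Or.inl (Or.inr (show σ x = r from h ▸ h'))))
          (fun h => hst.elim (fun h' => Or.inr (Or.inl (show σ y = s from h ▸ h')))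
            (fun h' => Or.inr (Or.inr (show σ y = r from h ▸ h')))))
    · push_neg at hst
      exact connSet_dissolve_of_not_mem hN
        (fun hm => hm.elim (fun hm => hst.1 hm) (fun hm => hst.2 hm))
        (hxyt.elim
          (fun h => Or.inl (fun hm => hm.elim
            (fun hm => hst.1 (by rw [← h]; exact hm))
            (fun hm => hst.2 (by rw [← h]; exact hm))))
          (fun h => Or.inr (fun hm => hm.elim
            (fun hm => hst.1 (by rw [← h]; exact hm))
            (fun hm => hst.2 (by rw [← h]; exact hm)))))
end Dissolve


lemma bcg_eq_of_step (A B : BGraph) (h : DissolveStep A B) : bcg B.G = bcg A.G := by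
  obtain ⟨v, x, y, hxy, hN, ⟨e⟩⟩ := h
  unfold bcg
  congr 1
  ext k
  simp only [Set.mem_setOf_eq]
  constructor
  · intro hB
    exact isContraction_of_dissolve hxy hN ((isContraction_iso e).mp hB)
  · intro hA
    exact (isContraction_iso e).mpr (isContraction_dissolve hxy hN hA)

/-- If `B` is a dissolution of `A`, then `bcg(B) = bcg(A)`. -/
theorem stmt_6 (A B : BGraph) (hd : IsDissolution A B) :
    bcg B.G = bcg A.G := by
  induction hd with
  | refl => rfl
  | tail _ h ih => exact (bcg_eq_of_step _ _ h).trans ih
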